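/- arXiv:1702.08671 — 4 statements merged into one kernel-verified Lean document; each statement's English description precedes it below -/
import Mathlib

section
/- Let A, B be positive bounded linear operators on a complex Hilbert space H such that AB is normal. Then AB ≥ 0. -/
set_option synthInstance.maxHeartbeats 1000000
set_option maxHeartbeats 1000000
open scoped ComplexOrder


variable {H : Type*} [NormedAddCommGroup H] [InnerProductSpace ℂ H] [CompleteSpace H]

theorem mul_nonneg_of_nonneg_of_nonneg_of_normal_mul (A B : H →L[ℂ] H)
    (hA : 0 ≤ A) (hB : 0 ≤ B) (hAB : IsStarNormal (A * B)) :
    0 ≤ A * B := by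
  set S := CFC.sqrt A with hSdef
  have hS : 0 ≤ S := CFC.sqrt_nonneg (a := A)
  have hSsq : S * S = A := CFC.sqrt_mul_sqrt_self A hA
  have hSsa : IsSelfAdjoint S := hS.isSelfAdjoint
  have hC : 0 ≤ S * B * S := by
    have := star_left_conjugate_nonneg hB S
    rwa [hSsa.star_eq] at this
  rw [StarOrderedRing.nonneg_iff_spectrum_nonneg (R := ℂ) _ hAB]
  intro z hz
  rcases eq_or_ne z 0 with rfl | hz0
  · exact le_refl 0
  · have h1 : z ∈ spectrum ℂ (S * (S * B)) := by rwa [← mul_assoc, hSsq]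
    have h2 : z ∈ spectrum ℂ ((S * B) * S) \ {0} := by
      rw [← spectrum.nonzero_mul_comm]
      exact ⟨h1, hz0⟩
    have h3 : z ∈ spectrum ℂ (S * B * S) := h2.1
    exact spectrum_nonneg_of_nonneg hC h3
end

section
/- Let A, B be normal bounded linear operators on a complex Hilbert space H with AB = BA. Then |AB| = |A*B| = |AB*| = |A*B*| = |B*A*| = |B*A| = |BA*| = |BA|. -/
variable {H : Type*} [NormedAddCommGroup H] [InnerProductSpace ℂ H] [CompleteSpace H]

open NormedSpace in
private lemma exp_skew_norm_le (S : H →L[ℂ] H) (hS : star S = -S) : ‖exp S‖ ≤ 1 := by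
  let +nondep : NormedAlgebra ℚ (H →L[ℂ] H) := .restrictScalars ℚ ℂ _
  have h1 : star (exp S) * exp S = 1 := by
    rw [star_exp, hS, ← exp_add_of_commute ((Commute.refl S).neg_left), neg_add_cancel, exp_zero]
  have h2 : ‖star (exp S) * exp S‖ = ‖exp S‖ * ‖exp S‖ :=
    CStarRing.norm_star_mul_self
  rw [h1] at h2
  have h3 : ‖(1 : H →L[ℂ] H)‖ ≤ 1 := ContinuousLinearMap.norm_id_le
  nlinarith [norm_nonneg (exp S)]

open NormedSpace in
private lemma fuglede (A B : H →L[ℂ] H) (hA : IsStarNormal A) (h : A * B = B * A) :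
    star A * B = B * star A := by
  let +nondep : NormedAlgebra ℚ (H →L[ℂ] H) := .restrictScalars ℚ ℂ _
  have hAA : Commute (star A) A := hA.star_comm_self
  have hABc : Commute A B := h
  set f : ℂ → (H →L[ℂ] H) := fun z => exp (z • star A) * B * exp (z • (-star A)) with hf
  have hdiff : Differentiable ℂ f := by
    have d1 : Differentiable ℂ fun z : ℂ => exp (z • star A) := fun z =>
      (hasDerivAt_exp_smul_const (𝕂 := ℂ) (star A) z).differentiableAt
    have d2 : Differentiable ℂ fun z : ℂ => exp (z • (-star A)) := fun z =>
      (hasDerivAt_exp_smul_const (𝕂 := ℂ) (-star A) z).differentiableAt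
    exact (d1.mul (differentiable_const B)).mul d2
  have hbound : ∀ z : ℂ, ‖f z‖ ≤ ‖B‖ := by
    intro z
    set c : ℂ := (starRingEnd ℂ) z with hc
    set S : H →L[ℂ] H := z • star A - c • A with hSdef
    have hScomm : Commute S (c • A) := by
      apply Commute.sub_left
      · exact (hAA.smul_left z).smul_right c
      · exact ((Commute.refl A).smul_left c).smul_right c
    have hSstar : star S = -S := by
      rw [hSdef]
      simp [star_smul, hc, neg_sub]
    have e1 : exp (z • star A) = exp S * exp (c • A) := by
      rw [← exp_add_of_commute hScomm, sub_add_cancel]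
    have e2 : exp (z • (-star A)) = exp (-(c • A)) * exp (-S) := by
      rw [← exp_add_of_commute hScomm.neg_left.neg_right.symm]
      congr 1
      rw [hSdef]
      module
    have hBexp : exp (c • A) * B = B * exp (c • A) := by
      exact ((hABc.smul_left c).exp_left).eq
    have hfz : f z = exp S * B * exp (-S) := by
      rw [hf]
      simp only
      rw [e1, e2, mul_assoc (exp S), hBexp, ← mul_assoc, ← mul_assoc, mul_assoc _ (exp (c • A)),
        ← exp_add_of_commute ((Commute.refl (c • A)).neg_right), add_neg_cancel, exp_zero, mul_one]
    rw [hfz]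
    have n1 : ‖exp S‖ ≤ 1 := exp_skew_norm_le S hSstar
    have n2 : ‖exp (-S)‖ ≤ 1 := exp_skew_norm_le (-S) (by rw [star_neg, hSstar, neg_neg])
    calc ‖exp S * B * exp (-S)‖ ≤ ‖exp S‖ * ‖B‖ * ‖exp (-S)‖ :=
          (norm_mul_le _ _).trans (by gcongr; exact norm_mul_le _ _)
      _ ≤ 1 * ‖B‖ * 1 := by
          apply mul_le_mul _ n2 (norm_nonneg _) (by positivity)
          exact mul_le_mul n1 le_rfl (norm_nonneg _) zero_le_one
      _ = ‖B‖ := by ring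
  have hb : Bornology.IsBounded (Set.range f) := by
    rw [isBounded_iff_forall_norm_le]
    exact ⟨‖B‖, by rintro x ⟨z, rfl⟩; exact hbound z⟩
  have hconst : ∀ z : ℂ, f z = B := by
    intro z
    have := hdiff.apply_eq_apply_of_bounded hb z 0
    rw [this]
    simp [hf, exp_zero]
  have hcomm' : ∀ z : ℂ, exp (z • star A) * B = B * exp (z • star A) := by
    intro z
    have h1 := hconst z
    have h2 : exp (z • (-star A)) * exp (z • star A) = 1 := by
      rw [smul_neg, ← exp_add_of_commute (((Commute.refl (star A)).smul_left z).smul_right z).neg_left,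
        neg_add_cancel, exp_zero]
    calc exp (z • star A) * B
        = exp (z • star A) * B * (exp (z • (-star A)) * exp (z • star A)) := by
          rw [h2, mul_one]
      _ = f z * exp (z • star A) := by
          rw [hf]; simp only; rw [mul_assoc (exp (z • star A) * B)]
      _ = B * exp (z • star A) := by rw [h1]
  have hd1 : HasDerivAt (fun z : ℂ => exp (z • star A) * B) (star A * B) 0 := by
    have := (hasDerivAt_exp_smul_const' (𝕂 := ℂ) (star A) 0).mul_const B
    simpa [exp_zero] using this
  have hd2 : HasDerivAt (fun z : ℂ => exp (z • star A) * B) (B * star A) 0 := by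
    have := (hasDerivAt_exp_smul_const' (𝕂 := ℂ) (star A) 0).const_mul B
    simp only [zero_smul, exp_zero, mul_one] at this
    have heq : (fun z : ℂ => B * exp (z • star A)) = fun z : ℂ => exp (z • star A) * B := by
      funext z; rw [hcomm']
    rw [heq] at this
    exact this
  exact hd1.unique hd2

/-- The absolute value (modulus) of a bounded operator: `|A| = √(A* A)`. -/
noncomputable def ContinuousLinearMap.abs (A : H →L[ℂ] H) : H →L[ℂ] H :=
  CFC.sqrt (star A * A)

private lemma sq_eq (X Y K₁ K₂ : H →L[ℂ] H) (hX : star X * X = K₁) (hY : star Y * Y = K₂)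
    (hc : K₁ * Y = Y * K₁) : star (X * Y) * (X * Y) = K₂ * K₁ := by
  rw [star_mul]
  calc star Y * star X * (X * Y) = star Y * (star X * X * Y) := by
        rw [mul_assoc, ← mul_assoc (star X)]
    _ = star Y * (Y * K₁) := by rw [hX, hc]
    _ = K₂ * K₁ := by rw [← mul_assoc, hY]

theorem abs_products_eq_of_commute_of_normal (A B : H →L[ℂ] H)
    (hcomm : A * B = B * A) (hA : IsStarNormal A) (hB : IsStarNormal B) :
    (A * B).abs = (star A * B).abs ∧
    (A * B).abs = (A * star B).abs ∧
    (A * B).abs = (star A * star B).abs ∧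
    (A * B).abs = (star B * star A).abs ∧
    (A * B).abs = (star B * A).abs ∧
    (A * B).abs = (B * star A).abs ∧
    (A * B).abs = (B * A).abs := by
  have hAn : star A * A = A * star A := hA.star_comm_self
  have hBn : star B * B = B * star B := hB.star_comm_self
  have hA'B : star A * B = B * star A := fuglede A B hA hcomm
  have hB'A : star B * A = A * star B := fuglede B A hB hcomm.symm
  have hA'B' : star B * star A = star A * star B := by
    have := congrArg star hcomm
    simpa [star_mul] using this
  set KA : H →L[ℂ] H := star A * A with hKA
  set KB : H →L[ℂ] H := star B * B with hKB
  -- star X * X = KA for X ∈ {A, star A}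
  have hXA : star A * A = KA := rfl
  have hXA' : star (star A) * star A = KA := by rw [star_star, ← hAn]
  have hXB : star B * B = KB := rfl
  have hXB' : star (star B) * star B = KB := by rw [star_star, ← hBn]
  -- KA commutes with B and star B
  have cAB : KA * B = B * KA := by
    rw [hKA, mul_assoc, hcomm, ← mul_assoc, hA'B, mul_assoc]
  have cAB' : KA * star B = star B * KA := by
    rw [hKA, mul_assoc, ← hB'A, ← mul_assoc, ← hA'B', mul_assoc]
  -- KB commutes with A and star A
  have cBA : KB * A = A * KB := by
    rw [hKB, mul_assoc, ← hcomm, ← mul_assoc, hB'A, mul_assoc]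
  have cBA' : KB * star A = star A * KB := by
    rw [hKB, mul_assoc, ← hA'B, ← mul_assoc, hA'B', mul_assoc]
  -- KA commutes with KB
  have cK : KA * KB = KB * KA := by
    rw [hKB, ← mul_assoc, cAB', mul_assoc, cAB, ← mul_assoc]
  have e0 : star (A * B) * (A * B) = KB * KA := sq_eq A B KA KB hXA hXB cAB
  have e1 : star (star A * B) * (star A * B) = KB * KA := sq_eq (star A) B KA KB hXA' hXB cAB
  have e2 : star (A * star B) * (A * star B) = KB * KA := sq_eq A (star B) KA KB hXA hXB' cAB'
  have e3 : star (star A * star B) * (star A * star B) = KB * KA :=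
    sq_eq (star A) (star B) KA KB hXA' hXB' cAB'
  have e4 : star (star B * star A) * (star B * star A) = KB * KA :=
    (sq_eq (star B) (star A) KB KA hXB' hXA' cBA').trans cK
  have e5 : star (star B * A) * (star B * A) = KB * KA :=
    (sq_eq (star B) A KB KA hXB' hXA cBA).trans cK
  have e6 : star (B * star A) * (B * star A) = KB * KA :=
    (sq_eq B (star A) KB KA hXB hXA' cBA').trans cK
  have e7 : star (B * A) * (B * A) = KB * KA :=
    (sq_eq B A KB KA hXB hXA cBA).trans cK
  unfold ContinuousLinearMap.abs
  refine ⟨?_, ?_, ?_, ?_, ?_, ?_, ?_⟩ <;>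
    · congr 1
      first
      | rw [e0, e1] | rw [e0, e2] | rw [e0, e3] | rw [e0, e4]
      | rw [e0, e5] | rw [e0, e6] | rw [e0, e7]
end

section
/- Let A, B be bounded linear operators on a complex Hilbert space H with AB = BA. If A is normal and B is invertible, then |AB⁻¹| = |A||B⁻¹|. -/
set_option linter.unusedSectionVars false

open scoped NNReal
open NormedSpace

section Aux

variable {𝔸 : Type*} [CStarAlgebra 𝔸] [PartialOrder 𝔸] [StarOrderedRing 𝔸]

/-- If `b` commutes with a selfadjoint `a`, it commutes with `cfc f a`. -/
lemma commute_cfc_real {a b : 𝔸} (ha : IsSelfAdjoint a) (hb : Commute b a) (f : ℝ → ℝ) :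
    Commute b (cfc f a) := by
  have hkey : ∀ g : C(spectrum ℝ a, ℝ), Commute b (cfcHom ha g) := by
    intro g
    have hc : Continuous (cfcHom ha (R := ℝ)) := (cfcHom_isClosedEmbedding ha).continuous
    have hclosed : IsClosed {x : C(spectrum ℝ a, ℝ) | Commute b (cfcHom ha x)} :=
      isClosed_eq (continuous_const.mul hc) (hc.mul continuous_const)
    have hsub : (polynomialFunctions (spectrum ℝ a) : Set C(spectrum ℝ a, ℝ)) ⊆
        {x | Commute b (cfcHom ha x)} := by
      intro p hp
      rw [SetLike.mem_coe, polynomialFunctions.eq_adjoin_X] at hp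
      induction hp using Algebra.adjoin_induction with
      | mem x hx =>
        simp only [Set.mem_singleton_iff] at hx
        subst hx
        have hX : (Polynomial.toContinuousMapOnAlgHom (spectrum ℝ a)) Polynomial.X =
            (ContinuousMap.restrict (spectrum ℝ a) (ContinuousMap.id ℝ)) := by
          ext x; simp
        rw [Set.mem_setOf_eq, hX, cfcHom_id ha]
        exact hb
      | algebraMap r =>
        rw [Set.mem_setOf_eq, AlgHomClass.commutes]
        exact (Algebra.commutes r b).symm
      | add x y _ _ hx hy =>
        rw [Set.mem_setOf_eq, map_add]
        exact Commute.add_right hx hy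
      | mul x y _ _ hx hy =>
        rw [Set.mem_setOf_eq, map_mul]
        exact Commute.mul_right hx hy
    have hgmem : g ∈ closure (polynomialFunctions (spectrum ℝ a) : Set C(spectrum ℝ a, ℝ)) := by
      rw [← Subalgebra.topologicalClosure_coe, polynomialFunctions.topologicalClosure]
      trivial
    exact closure_minimal hsub hclosed hgmem
  by_cases hf : ContinuousOn f (spectrum ℝ a)
  · rw [cfc_apply f a ha hf]
    exact hkey _
  · rw [cfc_apply_of_not_continuousOn a hf]
    exact Commute.zero_right b

/-- If `b` commutes with `0 ≤ a`, then `b` commutes with `√a`. -/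
lemma commute_sqrt {a b : 𝔸} (ha : 0 ≤ a) (hb : Commute b a) : Commute b (CFC.sqrt a) := by
  rw [CFC.sqrt_eq_cfc, cfc_nnreal_eq_real _ _ ha]
  exact commute_cfc_real (IsSelfAdjoint.of_nonneg ha) hb _

/-- Fuglede's theorem: if `a` is normal and commutes with `b`, so does `star a`. -/
lemma fuglede_s6 {a b : 𝔸} (ha : IsStarNormal a) (hab : Commute a b) : Commute (star a) b := by
  letI : NormedAlgebra ℚ 𝔸 := .restrictScalars ℚ ℂ 𝔸
  rcases subsingleton_or_nontrivial 𝔸 with hs | hs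
  · exact Subsingleton.elim _ _
  have hnorm : Commute (star a) a := ha.star_comm_self
  have hbe : ∀ w : ℂ, Commute b (exp (w • a)) := fun w =>
    Commute.exp_right (hab.symm.smul_right w)
  have hinv : ∀ x : 𝔸, exp (-x) * exp x = 1 := fun x => by
    rw [← exp_add_of_commute (Commute.refl x).neg_left, neg_add_cancel, exp_zero]
  have hbdd : ∀ z : ℂ, ‖exp (z • star a) * b * exp (z • (-star a))‖ ≤ ‖b‖ := by
    intro z
    have hMskew : (z • star a - (starRingEnd ℂ z) • a) ∈ skewAdjoint 𝔸 := by
      simp only [skewAdjoint.mem_iff, star_sub, star_smul, star_star, neg_sub,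
        starRingEnd_apply]
    have hcomm1 : Commute (z • star a) (-((starRingEnd ℂ z) • a)) :=
      ((hnorm.smul_left z).smul_right _).neg_right
    have hexpM : exp (z • star a - (starRingEnd ℂ z) • a)
        = exp (z • star a) * exp (-((starRingEnd ℂ z) • a)) := by
      rw [← exp_add_of_commute hcomm1, ← sub_eq_add_neg]
    have hexpM' : exp (-(z • star a - (starRingEnd ℂ z) • a))
        = exp ((starRingEnd ℂ z) • a) * exp (-(z • star a)) := by
      rw [← exp_add_of_commute (((hnorm.symm.smul_left _).smul_right z).neg_right),
        neg_sub, sub_eq_add_neg]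
    have h1 : exp (-((starRingEnd ℂ z) • a)) * b = b * exp (-((starRingEnd ℂ z) • a)) := by
      have h2 := (hbe (-(starRingEnd ℂ z))).symm
      rw [neg_smul] at h2
      exact h2.eq
    have hfz : exp (z • star a) * b * exp (z • (-star a))
        = exp (z • star a - (starRingEnd ℂ z) • a) * b
          * exp (-(z • star a - (starRingEnd ℂ z) • a)) := by
      rw [hexpM, hexpM']
      calc exp (z • star a) * b * exp (z • (-star a))
          = exp (z • star a) * b * exp (-(z • star a)) := by rw [smul_neg]
        _ = exp (z • star a) * b * ((exp (-((starRingEnd ℂ z) • a))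
              * exp ((starRingEnd ℂ z) • a)) * exp (-(z • star a))) := by
            rw [hinv]; rw [one_mul]
        _ = exp (z • star a) * (b * exp (-((starRingEnd ℂ z) • a)))
              * (exp ((starRingEnd ℂ z) • a) * exp (-(z • star a))) := by
            simp only [mul_assoc]
        _ = exp (z • star a) * (exp (-((starRingEnd ℂ z) • a)) * b)
              * (exp ((starRingEnd ℂ z) • a) * exp (-(z • star a))) := by
            rw [h1]
        _ = exp (z • star a) * exp (-((starRingEnd ℂ z) • a)) * b
              * (exp ((starRingEnd ℂ z) • a) * exp (-(z • star a))) := by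
            simp only [mul_assoc]
    have hu1 : ‖exp (z • star a - (starRingEnd ℂ z) • a)‖ = 1 :=
      CStarRing.norm_of_mem_unitary (exp_mem_unitary_of_mem_skewAdjoint hMskew)
    have hu2 : ‖exp (-(z • star a - (starRingEnd ℂ z) • a))‖ = 1 :=
      CStarRing.norm_of_mem_unitary (exp_mem_unitary_of_mem_skewAdjoint (neg_mem hMskew))
    calc ‖exp (z • star a) * b * exp (z • (-star a))‖
        = ‖exp (z • star a - (starRingEnd ℂ z) • a) * b
            * exp (-(z • star a - (starRingEnd ℂ z) • a))‖ := by rw [hfz]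
      _ ≤ ‖exp (z • star a - (starRingEnd ℂ z) • a) * b‖
            * ‖exp (-(z • star a - (starRingEnd ℂ z) • a))‖ := norm_mul_le _ _
      _ ≤ ‖exp (z • star a - (starRingEnd ℂ z) • a)‖ * ‖b‖
            * ‖exp (-(z • star a - (starRingEnd ℂ z) • a))‖ := by
          gcongr; exact norm_mul_le _ _
      _ = ‖b‖ := by rw [hu1, hu2, one_mul, mul_one]
  have hdiff : Differentiable ℂ
      (fun z : ℂ => exp (z • star a) * b * exp (z • (-star a))) := by
    have h1 : Differentiable ℂ (fun z : ℂ => exp (z • star a)) := fun z =>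
      (hasDerivAt_exp_smul_const (𝕂 := ℂ) (star a) z).differentiableAt
    have h2 : Differentiable ℂ (fun z : ℂ => exp (z • (-star a))) := fun z =>
      (hasDerivAt_exp_smul_const (𝕂 := ℂ) (-star a) z).differentiableAt
    exact (h1.mul_const b).mul h2
  have hbound : Bornology.IsBounded
      (Set.range (fun z : ℂ => exp (z • star a) * b * exp (z • (-star a)))) := by
    rw [isBounded_iff_forall_norm_le]
    exact ⟨‖b‖, by rintro x ⟨z, rfl⟩; exact hbdd z⟩
  have hconst : ∀ z : ℂ, exp (z • star a) * b * exp (z • (-star a)) = b := by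
    intro z
    have h0 := hdiff.apply_eq_apply_of_bounded hbound z 0
    simpa using h0
  have hcomm_exp : ∀ z : ℂ, exp (z • star a) * b = b * exp (z • star a) := by
    intro z
    have h2 : exp (z • (-star a)) * exp (z • star a) = 1 := by
      rw [smul_neg]; exact hinv _
    calc exp (z • star a) * b
        = exp (z • star a) * b * (exp (z • (-star a)) * exp (z • star a)) := by
          rw [h2, mul_one]
      _ = exp (z • star a) * b * exp (z • (-star a)) * exp (z • star a) := by
          simp only [mul_assoc]
      _ = b * exp (z • star a) := by rw [hconst z]
  have hda : HasDerivAt (fun z : ℂ => exp (z • star a) * b) (star a * b) 0 := by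
    have := (hasDerivAt_exp_smul_const' (𝕂 := ℂ) (star a) 0).mul_const b
    simpa using this
  have hdb : HasDerivAt (fun z : ℂ => exp (z • star a) * b) (b * star a) 0 := by
    have h3 := (hasDerivAt_exp_smul_const' (𝕂 := ℂ) (star a) 0).const_mul b
    have heq : (fun z : ℂ => b * exp (z • star a)) =
        (fun z : ℂ => exp (z • star a) * b) := by
      funext z; rw [hcomm_exp z]
    rw [heq] at h3
    simpa using h3
  exact hda.unique hdb

/-- Key algebraic identity: `|a c| = |a| |c|` for commuting `a c` with `a` normal. -/
lemma sqrt_star_mul_self_mul {a c : 𝔸} (ha : IsStarNormal a) (h : Commute a c) :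
    CFC.sqrt (star (a * c) * (a * c)) = CFC.sqrt (star a * a) * CFC.sqrt (star c * c) := by
  have h1 : Commute (star a) c := fuglede_s6 ha h
  have h2 : Commute (star c) a := by
    have h1' := congrArg star h1.eq
    rw [star_mul, star_mul, star_star] at h1'
    exact h1'
  have h3 : Commute (star c) (star a) := by
    have h' := congrArg star h.eq
    rw [star_mul, star_mul] at h'
    exact h'
  set X := CFC.sqrt (star a * a) with hX
  set Y := CFC.sqrt (star c * c) with hY
  have hXpos : 0 ≤ X := by rw [hX]; exact CFC.sqrt_nonneg _
  have hYpos : 0 ≤ Y := by rw [hY]; exact CFC.sqrt_nonneg _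
  have hc_saa : Commute c (star a * a) := (h1.symm).mul_right h.symm
  have hXc : Commute c X := commute_sqrt (star_mul_self_nonneg a) hc_saa
  have hsc_saa : Commute (star c) (star a * a) := h3.mul_right h2
  have hXsc : Commute (star c) X := commute_sqrt (star_mul_self_nonneg a) hsc_saa
  have hX_scc : Commute X (star c * c) := (hXsc.symm).mul_right hXc.symm
  have hXY : Commute X Y := commute_sqrt (star_mul_self_nonneg c) hX_scc
  have hS : Commute Y (CFC.sqrt X) := commute_sqrt hXpos hXY.symm
  have hconj : X * Y = CFC.sqrt X * Y * CFC.sqrt X := by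
    conv_lhs => rw [← CFC.sqrt_mul_sqrt_self X hXpos, mul_assoc, ← hS.eq, ← mul_assoc]
  have hXYpos : 0 ≤ X * Y := by
    rw [hconj]
    have hsa : IsSelfAdjoint (CFC.sqrt X) := IsSelfAdjoint.of_nonneg (CFC.sqrt_nonneg _)
    simpa [hsa.star_eq] using star_left_conjugate_nonneg hYpos (CFC.sqrt X)
  have e3 : star (a * c) * (a * c) = (star a * a) * (star c * c) := by
    rw [star_mul]
    calc star c * star a * (a * c) = star c * (star a * a) * c := by
          simp only [mul_assoc]
      _ = (star a * a) * star c * c := by rw [hsc_saa.eq]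
      _ = (star a * a) * (star c * c) := by simp only [mul_assoc]
  refine CFC.sqrt_unique ?_ hXYpos
  rw [hXY.symm.mul_mul_mul_comm X Y, hX, hY,
    CFC.sqrt_mul_sqrt_self _ (star_mul_self_nonneg a),
    CFC.sqrt_mul_sqrt_self _ (star_mul_self_nonneg c), e3]

end Aux

variable {H : Type*} [NormedAddCommGroup H] [InnerProductSpace ℂ H] [CompleteSpace H]

theorem abs_mul_inv_of_commute_of_normal (A : H →L[ℂ] H) (B : (H →L[ℂ] H)ˣ)
    (hcomm : A * (B : H →L[ℂ] H) = (B : H →L[ℂ] H) * A) (hA : IsStarNormal A) :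
    (A * ((B⁻¹ : (H →L[ℂ] H)ˣ) : H →L[ℂ] H)).abs
      = A.abs * ((B⁻¹ : (H →L[ℂ] H)ˣ) : H →L[ℂ] H).abs := by
  have h1 : Commute A ((B⁻¹ : (H →L[ℂ] H)ˣ) : H →L[ℂ] H) :=
    Commute.units_inv_right hcomm
  simp only [ContinuousLinearMap.abs]
  exact sqrt_star_mul_self_mul hA h1
end

section
/- Let A, B be bounded linear operators on a complex Hilbert space H with AB = BA. If A is normal and B is hyponormal, then A*B is hyponormal. -/
variable {H : Type*} [NormedAddCommGroup H] [InnerProductSpace ℂ H] [CompleteSpace H]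

/-- A bounded operator `T` is hyponormal if `T T* ≤ T* T` in the Loewner order. -/
def ContinuousLinearMap.Hyponormal (T : H →L[ℂ] H) : Prop :=
  T * star T ≤ star T * T

theorem hyponormal_adjoint_mul_of_commute (A B : H →L[ℂ] H)
    (hcomm : A * B = B * A) (hA : IsStarNormal A) (hB : B.Hyponormal) :
    (star A * B).Hyponormal := by
  rw [ContinuousLinearMap.Hyponormal, ← sub_nonneg,
      ContinuousLinearMap.nonneg_iff_isPositive] at hB ⊢
  have key := hB.adjoint_conj A
  have hN : A * star A = star A * A := hA.star_comm_self.symm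
  have e1 : star (star A * B) * (star A * B) = star A * (star B * B) * A := by
    calc star (star A * B) * (star A * B)
        = star B * ((A * star A) * B) := by
          simp [star_mul, mul_assoc]
      _ = star B * star A * (A * B) := by rw [hN, mul_assoc, mul_assoc]
      _ = star (A * B) * (A * B) := by simp [star_mul, mul_assoc]
      _ = star (B * A) * (B * A) := by rw [hcomm]
      _ = star A * (star B * B) * A := by simp [star_mul, mul_assoc]
  have e2 : (star A * B) * star (star A * B) = star A * (B * star B) * A := by
    simp [star_mul, mul_assoc]
  have e3 : star (star A * B) * (star A * B) - (star A * B) * star (star A * B)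
      = ContinuousLinearMap.adjoint A ∘L (star B * B - B * star B) ∘L A := by
    rw [e1, e2, ← ContinuousLinearMap.star_eq_adjoint]
    ext x
    simp [mul_sub, sub_mul, mul_assoc, ContinuousLinearMap.mul_apply]
  rw [e3]
  convert key using 2
end
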